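/- Let p ∈ ℕ⁺ and let a ∈ [0,1)^p, b ∈ (0,1]^p with a_l < b_l for each coordinate l. Then the sequence of functions 1_J(x,a,b) = ∏_{l=1}^p 1_J(x_l, a_l, b_l), J = 0,1,2,…, is uniformly bounded on the open cube (0,1)^p: there exists M such that |1_J(x,a,b)| ≤ M for all J ∈ ℕ and all x ∈ (0,1)^p. -/

import Mathlib

/-- `cfun j x`: c₀(x)=1, c_{2j-1}(x)=cos((2j-1)x), c_{2j}(x)=sin((2j-1)x). -/
noncomputable def cfun (j : ℕ) (x : ℝ) : ℝ :=
  if j = 0 then 1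
  else if j % 2 = 1 then Real.cos ((j : ℝ) * x)
  else Real.sin (((j : ℝ) - 1) * x)

/-- `gfun j a b`: the coefficients g_j(a,b). -/
noncomputable def gfun (j : ℕ) (a b : ℝ) : ℝ :=
  if j = 0 then
    1 - (1 / 2) * ((if 0 < a then (1 : ℝ) else 0) + (if b < 1 then (1 : ℝ) else 0))
  else if j % 2 = 1 then
    (2 / (Real.pi * (j : ℝ))) *
      ((if b < 1 then (1 : ℝ) else 0) * Real.sin ((j : ℝ) * b) -
        (if 0 < a then (1 : ℝ) else 0) * Real.sin ((j : ℝ) * a))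
  else
    (2 / (Real.pi * ((j : ℝ) - 1))) *
      ((if 0 < a then (1 : ℝ) else 0) * Real.cos (((j : ℝ) - 1) * a) -
        (if b < 1 then (1 : ℝ) else 0) * Real.cos (((j : ℝ) - 1) * b))

/-- Indicator of the open interval (a,b). -/
noncomputable def indIoo (a b x : ℝ) : ℝ := if a < x ∧ x < b then 1 else 0

/-- The Jth partial sum 1_J(x,a,b) = Σ_{j=0}^{2J} c_j(x)·g_j(a,b). -/
noncomputable def oneJ (J : ℕ) (x a b : ℝ) : ℝ :=
  ∑ j ∈ Finset.range (2 * J + 1), cfun j x * gfun j a b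

/-- p-dimensional partial sum: 1_J(x,a,b) = ∏_{l} 1_J(x_l,a_l,b_l). -/
noncomputable def oneJp {p : ℕ} (J : ℕ) (x a b : Fin p → ℝ) : ℝ :=
  ∏ l, oneJ J (x l) (a l) (b l)

/-- p-dimensional indicator: 𝟙(a<x<b) = ∏_l 𝟙(a_l<x_l<b_l). -/
noncomputable def indBox {p : ℕ} (a b x : Fin p → ℝ) : ℝ :=
  ∏ l, indIoo (a l) (b l) (x l)

/-! ### Auxiliary lemmas -/

lemma sin_mul_sum (t : ℝ) (n : ℕ) :
    Real.sin t * ∑ j ∈ Finset.range n, Real.sin ((2*(j:ℝ)+1)*t)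
      = Real.sin ((n:ℝ) * t) ^ 2 := by
  induction n with
  | zero => simp
  | succ n ih =>
    rw [Finset.sum_range_succ, mul_add, ih]
    push_cast
    have e1 : (2*(n:ℝ)+1)*t = (n:ℝ)*t + (((n:ℝ)+1)*t) := by ring
    have e2 : ((n:ℝ)+1)*t = (n:ℝ)*t + t := by ring
    rw [e1, Real.sin_add, e2, Real.sin_add, Real.cos_add]
    nlinarith [Real.sin_sq_add_cos_sq ((n:ℝ)*t), Real.sin_sq_add_cos_sq t]

lemma Asum_bound {t : ℝ} (ht : 0 < Real.sin t) (n : ℕ) :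
    |∑ j ∈ Finset.range n, Real.sin ((2*(j:ℝ)+1)*t)| ≤ 1 / Real.sin t := by
  have h := sin_mul_sum t n
  have h1 : Real.sin ((n:ℝ)*t) ^ 2 ≤ 1 := by
    nlinarith [Real.neg_one_le_sin ((n:ℝ)*t), Real.sin_le_one ((n:ℝ)*t)]
  rw [abs_le]
  constructor
  · rw [neg_le, le_div_iff₀ ht]
    nlinarith [sq_nonneg (Real.sin ((n:ℝ)*t))]
  · rw [le_div_iff₀ ht]
    nlinarith [sq_nonneg (Real.sin ((n:ℝ)*t))]

lemma tail_bound {t : ℝ} (ht : 0 < Real.sin t) (m : ℕ) :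
    ∀ n, m ≤ n →
    |∑ j ∈ Finset.Ico m n, Real.sin ((2*(j:ℝ)+1)*t) / (2*(j:ℝ)+1)|
      ≤ 2 / Real.sin t / (2*(m:ℝ)+1) := by
  set A : ℕ → ℝ := fun k => ∑ j ∈ Finset.range k, Real.sin ((2*(j:ℝ)+1)*t) with hA
  have hAb : ∀ k l : ℕ, |A k - A l| ≤ 2 / Real.sin t := by
    intro k l
    calc |A k - A l| ≤ |A k| + |A l| := abs_sub _ _
      _ ≤ 1/Real.sin t + 1/Real.sin t := by
          have h1 := Asum_bound ht k; have h2 := Asum_bound ht l; linarith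
      _ = 2/Real.sin t := by ring
  have key : ∀ n, m ≤ n →
      |(∑ j ∈ Finset.Ico m n, Real.sin ((2*(j:ℝ)+1)*t) / (2*(j:ℝ)+1))
        - (A n - A m) / (2*(n:ℝ)+1)|
      ≤ 2/Real.sin t * (1/(2*(m:ℝ)+1) - 1/(2*(n:ℝ)+1)) := by
    intro n hn
    induction n, hn using Nat.le_induction with
    | base => simp
    | succ n hn ih =>
      have hsum : ∑ j ∈ Finset.Ico m (n+1), Real.sin ((2*(j:ℝ)+1)*t) / (2*(j:ℝ)+1)
          = (∑ j ∈ Finset.Ico m n, Real.sin ((2*(j:ℝ)+1)*t) / (2*(j:ℝ)+1))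
            + Real.sin ((2*(n:ℝ)+1)*t) / (2*(n:ℝ)+1) :=
        Finset.sum_Ico_succ_top hn _
      have hAs : A (n+1) = A n + Real.sin ((2*(n:ℝ)+1)*t) := Finset.sum_range_succ _ _
      have hn1 : (0:ℝ) < 2*(n:ℝ)+1 := by positivity
      have hn3 : (0:ℝ) < 2*(n:ℝ)+3 := by positivity
      have hcast : (((n:ℕ)+1 : ℕ):ℝ) = (n:ℝ)+1 := by push_cast; ring
      have hdiff : (∑ j ∈ Finset.Ico m (n+1), Real.sin ((2*(j:ℝ)+1)*t) / (2*(j:ℝ)+1))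
            - (A (n+1) - A m) / (2*((n:ℝ)+1)+1)
          = ((∑ j ∈ Finset.Ico m n, Real.sin ((2*(j:ℝ)+1)*t) / (2*(j:ℝ)+1))
              - (A n - A m) / (2*(n:ℝ)+1))
            + (A (n+1) - A m) * (1/(2*(n:ℝ)+1) - 1/(2*(n:ℝ)+3)) := by
        rw [hsum, hAs]
        ring
      rw [hcast, hdiff]
      have hb : |(A (n+1) - A m) * (1/(2*(n:ℝ)+1) - 1/(2*(n:ℝ)+3))|
          ≤ 2/Real.sin t * (1/(2*(n:ℝ)+1) - 1/(2*(n:ℝ)+3)) := by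
        rw [abs_mul]
        have hpos : (0:ℝ) ≤ 1/(2*(n:ℝ)+1) - 1/(2*(n:ℝ)+3) := by
          rw [sub_nonneg]
          apply one_div_le_one_div_of_le hn1; linarith
        rw [abs_of_nonneg hpos]
        exact mul_le_mul_of_nonneg_right (hAb _ _) hpos
      calc _ ≤ _ := abs_add_le _ _
        _ ≤ 2/Real.sin t * (1/(2*(m:ℝ)+1) - 1/(2*(n:ℝ)+1))
            + 2/Real.sin t * (1/(2*(n:ℝ)+1) - 1/(2*(n:ℝ)+3)) := add_le_add ih hb
        _ = 2/Real.sin t * (1/(2*(m:ℝ)+1) - 1/(2*((n:ℝ)+1)+1)) := by ring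
  intro n hn
  have h1 := key n hn
  have hn1 : (0:ℝ) < 2*(n:ℝ)+1 := by positivity
  have h2 : |(A n - A m) / (2*(n:ℝ)+1)| ≤ 2/Real.sin t / (2*(n:ℝ)+1) := by
    rw [abs_div, abs_of_pos hn1]
    exact div_le_div_of_nonneg_right (hAb _ _) hn1.le
  have heq : (∑ j ∈ Finset.Ico m n, Real.sin ((2*(j:ℝ)+1)*t) / (2*(j:ℝ)+1))
      = ((∑ j ∈ Finset.Ico m n, Real.sin ((2*(j:ℝ)+1)*t) / (2*(j:ℝ)+1))
          - (A n - A m) / (2*(n:ℝ)+1)) + (A n - A m) / (2*(n:ℝ)+1) := by ring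
  rw [heq]
  have h3 : 2/Real.sin t * (1/(2*(m:ℝ)+1) - 1/(2*(n:ℝ)+1)) + 2/Real.sin t/(2*(n:ℝ)+1)
      = 2/Real.sin t/(2*(m:ℝ)+1) := by ring
  calc _ ≤ _ := abs_add_le _ _
    _ ≤ 2/Real.sin t/(2*(m:ℝ)+1) := by rw [← h3]; exact add_le_add h1 h2

/-- The sine partial sums Σ_{j<J} sin((2j+1)t)/(2j+1). -/
noncomputable def Ssum (J : ℕ) (t : ℝ) : ℝ :=
  ∑ j ∈ Finset.range J, Real.sin ((2*(j:ℝ)+1)*t) / (2*(j:ℝ)+1)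

lemma head_bound {t : ℝ} (ht : 0 ≤ t) (k : ℕ) :
    |∑ j ∈ Finset.range k, Real.sin ((2*(j:ℝ)+1)*t) / (2*(j:ℝ)+1)| ≤ (k:ℝ) * t := by
  calc |∑ j ∈ Finset.range k, Real.sin ((2*(j:ℝ)+1)*t) / (2*(j:ℝ)+1)|
      ≤ ∑ j ∈ Finset.range k, |Real.sin ((2*(j:ℝ)+1)*t) / (2*(j:ℝ)+1)| :=
        Finset.abs_sum_le_sum_abs _ _
    _ ≤ ∑ j ∈ Finset.range k, t := by
        apply Finset.sum_le_sum
        intro j _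
        have hj : (0:ℝ) < 2*(j:ℝ)+1 := by positivity
        rw [abs_div, abs_of_pos hj, div_le_iff₀ hj]
        calc |Real.sin ((2*(j:ℝ)+1)*t)| ≤ |(2*(j:ℝ)+1)*t| := Real.abs_sin_le_abs
          _ = t * (2*(j:ℝ)+1) := by
              rw [abs_of_nonneg (by positivity)]; ring
    _ = (k:ℝ) * t := by rw [Finset.sum_const, Finset.card_range, nsmul_eq_mul]

lemma Ssum_bound_pos {t : ℝ} (ht : 0 < t) (ht1 : t ≤ 1) (J : ℕ) :
    |Ssum J t| ≤ 4 := by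
  have hsin : Real.sin t ≥ 3/4 * t := by
    nlinarith [Real.sin_gt_sub_cube ht,
      mul_nonneg (mul_nonneg ht.le (sub_nonneg.2 ht1)) (by linarith : (0:ℝ) ≤ 1+t)]
  have hsinpos : 0 < Real.sin t := lt_of_lt_of_le (by linarith) hsin
  set m := ⌈1/t⌉₊ with hm
  have hmt : 1 ≤ (m:ℝ) * t := by
    rw [← div_le_iff₀ ht]
    exact Nat.le_ceil _
  have hmt2 : (m:ℝ) * t ≤ 1 + t := by
    have := Nat.ceil_lt_add_one (by positivity : (0:ℝ) ≤ 1/t)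
    calc (m:ℝ) * t ≤ (1/t + 1) * t := by nlinarith
      _ = 1 + t := by field_simp
  rcases le_or_gt J m with hJm | hJm
  · calc |Ssum J t| ≤ (J:ℝ) * t := head_bound ht.le J
      _ ≤ (m:ℝ) * t := by
          have : (J:ℝ) ≤ (m:ℝ) := by exact_mod_cast hJm
          nlinarith
      _ ≤ 4 := by linarith
  · have hsplit : Ssum J t
        = (∑ j ∈ Finset.range m, Real.sin ((2*(j:ℝ)+1)*t) / (2*(j:ℝ)+1))
          + ∑ j ∈ Finset.Ico m J, Real.sin ((2*(j:ℝ)+1)*t) / (2*(j:ℝ)+1) := by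
      rw [Ssum, Finset.range_eq_Ico, ← Finset.sum_Ico_consecutive _ (Nat.zero_le m) hJm.le,
        ← Finset.range_eq_Ico]
    have h1 := head_bound ht.le m
    have h2 := tail_bound hsinpos m J hJm.le
    have h3 : 2 / Real.sin t / (2*(m:ℝ)+1) ≤ 4/3 := by
      have hd : (0:ℝ) < Real.sin t * (2*(m:ℝ)+1) := by positivity
      rw [div_div, div_le_iff₀ hd]
      have : Real.sin t * (2*(m:ℝ)+1) ≥ 3/4*t * (2*(m:ℝ)+1) := by
        apply mul_le_mul_of_nonneg_right hsin (by positivity)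
      nlinarith
    calc |Ssum J t| ≤ (m:ℝ)*t + 2 / Real.sin t / (2*(m:ℝ)+1) := by
          rw [hsplit]; exact (abs_add_le _ _).trans (add_le_add h1 h2)
      _ ≤ 4 := by linarith

lemma Ssum_bound {t : ℝ} (ht : |t| ≤ 1) (J : ℕ) : |Ssum J t| ≤ 4 := by
  rcases lt_trichotomy t 0 with h | h | h
  · have hodd : Ssum J t = - Ssum J (-t) := by
      rw [Ssum, Ssum, ← Finset.sum_neg_distrib]
      apply Finset.sum_congr rfl
      intro j _
      rw [mul_neg, Real.sin_neg]
      ring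
    rw [hodd, abs_neg]
    exact Ssum_bound_pos (by linarith) (by rw [abs_of_neg h] at ht; linarith) J
  · simp [Ssum, h]
  · exact Ssum_bound_pos h (by rwa [abs_of_pos h] at ht) J

lemma oneJ_eq (J : ℕ) (x a b : ℝ) :
    oneJ J x a b = gfun 0 a b
      + 2/Real.pi * ((if b < 1 then (1:ℝ) else 0) * Ssum J (b - x)
        + (if 0 < a then (1:ℝ) else 0) * Ssum J (x - a)) := by
  set Ia := (if 0 < a then (1:ℝ) else 0) with hIa
  set Ib := (if b < 1 then (1:ℝ) else 0) with hIb
  induction J with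
  | zero => simp [oneJ, cfun, Ssum]
  | succ J ih =>
    have hidx : 2*(J+1)+1 = (2*J+1)+1+1 := by ring
    rw [oneJ, hidx, Finset.sum_range_succ, Finset.sum_range_succ, ← oneJ, ih]
    set m : ℝ := 2*(J:ℝ)+1 with hmdef
    have hm0 : m ≠ 0 := by positivity
    have hcast1 : ((2*J+1 : ℕ):ℝ) = m := by rw [hmdef]; push_cast; ring
    have hcast2 : ((2*J+1+1 : ℕ):ℝ) - 1 = m := by rw [hmdef]; push_cast; ring
    have hc1 : cfun (2*J+1) x = Real.cos (m*x) := by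
      rw [cfun, if_neg (by omega), if_pos (by omega), hcast1]
    have hc2 : cfun (2*J+1+1) x = Real.sin (m*x) := by
      rw [cfun, if_neg (by omega), if_neg (by omega), hcast2]
    have hg1 : gfun (2*J+1) a b = (2/(Real.pi*m)) * (Ib * Real.sin (m*b) - Ia * Real.sin (m*a)) := by
      rw [gfun, if_neg (by omega), if_pos (by omega), hcast1, ← hIa, ← hIb]
    have hg2 : gfun (2*J+1+1) a b = (2/(Real.pi*m)) * (Ia * Real.cos (m*a) - Ib * Real.cos (m*b)) := by
      rw [gfun, if_neg (by omega), if_neg (by omega), hcast2, ← hIa, ← hIb]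
    have hS : ∀ t, Ssum (J+1) t = Ssum J t + Real.sin (m*t)/m := by
      intro t
      rw [Ssum, Finset.sum_range_succ, ← Ssum, hmdef]
    rw [hc1, hc2, hg1, hg2, hS, hS]
    have hsb : Real.sin (m*(b-x)) = Real.sin (m*b)*Real.cos (m*x) - Real.cos (m*b)*Real.sin (m*x) := by
      rw [mul_sub, Real.sin_sub]
    have hsa : Real.sin (m*(x-a)) = Real.sin (m*x)*Real.cos (m*a) - Real.cos (m*x)*Real.sin (m*a) := by
      rw [mul_sub, Real.sin_sub]
    rw [hsb, hsa]
    field_simp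
    ring

lemma oneJ_bound {x a b : ℝ} (hx : x ∈ Set.Ioo (0:ℝ) 1) (ha : a ∈ Set.Ico (0:ℝ) 1)
    (hb : b ∈ Set.Ioc (0:ℝ) 1) (J : ℕ) : |oneJ J x a b| ≤ 9 := by
  obtain ⟨hx0, hx1⟩ := hx
  obtain ⟨ha0, ha1⟩ := ha
  obtain ⟨hb0, hb1⟩ := hb
  rw [oneJ_eq]
  have hbx : |b - x| ≤ 1 := abs_le.2 ⟨by linarith, by linarith⟩
  have hxa : |x - a| ≤ 1 := abs_le.2 ⟨by linarith, by linarith⟩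
  have hS1 := Ssum_bound hbx J
  have hS2 := Ssum_bound hxa J
  set Ia := (if 0 < a then (1:ℝ) else 0) with hIa
  set Ib := (if b < 1 then (1:ℝ) else 0) with hIb
  have hIa' : 0 ≤ Ia ∧ Ia ≤ 1 := by rw [hIa]; split_ifs <;> norm_num
  have hIb' : 0 ≤ Ib ∧ Ib ≤ 1 := by rw [hIb]; split_ifs <;> norm_num
  have hg0 : |gfun 0 a b| ≤ 1 := by
    rw [gfun, if_pos rfl, ← hIa, ← hIb, abs_le]
    constructor <;> [nlinarith [hIa'.1, hIa'.2, hIb'.1, hIb'.2];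
      nlinarith [hIa'.1, hIa'.2, hIb'.1, hIb'.2]]
  have hpi1 : (0:ℝ) < 2/Real.pi := by positivity
  have hpi2 : 2/Real.pi ≤ 1 := by
    rw [div_le_one Real.pi_pos]
    linarith [Real.pi_gt_three]
  have hin : |Ib * Ssum J (b-x) + Ia * Ssum J (x-a)| ≤ 8 := by
    calc |Ib * Ssum J (b-x) + Ia * Ssum J (x-a)|
        ≤ |Ib * Ssum J (b-x)| + |Ia * Ssum J (x-a)| := abs_add_le _ _
      _ = |Ib| * |Ssum J (b-x)| + |Ia| * |Ssum J (x-a)| := by rw [abs_mul, abs_mul]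
      _ ≤ 1 * 4 + 1 * 4 := by
          apply add_le_add <;> apply mul_le_mul <;>
            simp_all [abs_of_nonneg, abs_nonneg] <;> try linarith
      _ = 8 := by norm_num
  calc |gfun 0 a b + 2/Real.pi * (Ib * Ssum J (b-x) + Ia * Ssum J (x-a))|
      ≤ |gfun 0 a b| + |2/Real.pi * (Ib * Ssum J (b-x) + Ia * Ssum J (x-a))| := abs_add_le _ _
    _ ≤ 1 + 1 * 8 := by
        apply add_le_add hg0
        rw [abs_mul, abs_of_pos hpi1]
        exact mul_le_mul hpi2 hin (abs_nonneg _) (by norm_num)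
    _ = 9 := by norm_num

/-- the p-dimensional partial sums {1_J(·,a,b)} are uniformly bounded on (0,1)^p. -/
theorem oneJp_uniformly_bounded (p : ℕ) (hp : 0 < p) (a b : Fin p → ℝ)
    (ha : ∀ l, a l ∈ Set.Ico (0 : ℝ) 1) (hb : ∀ l, b l ∈ Set.Ioc (0 : ℝ) 1)
    (hab : ∀ l, a l < b l) :
    ∃ M : ℝ, ∀ (J : ℕ), ∀ x : Fin p → ℝ, (∀ l, x l ∈ Set.Ioo (0 : ℝ) 1) →
      |oneJp J x a b| ≤ M := by
  refine ⟨(9:ℝ)^p, fun J x hx => ?_⟩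
  rw [oneJp, Finset.abs_prod]
  calc ∏ l, |oneJ J (x l) (a l) (b l)| ≤ ∏ _l : Fin p, (9:ℝ) :=
        Finset.prod_le_prod (fun l _ => abs_nonneg _)
          (fun l _ => oneJ_bound (hx l) (ha l) (hb l) J)
    _ = (9:ℝ)^p := by simp
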